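/- Let a > 0, κ > 0, φ > 0 and C₀ > 0 be real constants, and define C : ℝ → ℝ by C(t) = (1/a)·log(1 − exp(−φ·a·κ·t)·(1 − exp(a·C₀))). Then C(0) = C₀ and, for every t ∈ ℝ, C is differentiable at t with derivative C'(t) = −φ·κ·(1 − exp(−a·C(t))). (This is Proposition 1: the closed-form solution of the photochemical state-switching ODE derived from the Beer–Lambert law.) -/

import Mathlib

/-- Proposition 1: the closed-form solution of the photochemical state-switching
ODE derived from the Beer–Lambert law. -/
theorem stmt_0 (a κ φ C₀ : ℝ) (ha : 0 < a) (hκ : 0 < κ) (hφ : 0 < φ) (hC₀ : 0 < C₀)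
    (C : ℝ → ℝ)
    (hC : ∀ t, C t = (1 / a) * Real.log (1 - Real.exp (-(φ * a * κ * t)) * (1 - Real.exp (a * C₀)))) :
    C 0 = C₀ ∧ ∀ t : ℝ, HasDerivAt C (-(φ * κ * (1 - Real.exp (-(a * C t))))) t := by
  have hCeq : C = fun t => (1 / a) * Real.log (1 - Real.exp (-(φ * a * κ * t)) * (1 - Real.exp (a * C₀))) := funext hC
  subst hCeq
  have hX : (1:ℝ) < Real.exp (a * C₀) := by
    rw [show (1:ℝ) = Real.exp 0 by simp]
    exact Real.exp_lt_exp.mpr (by positivity)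
  have hg : ∀ t : ℝ, (0:ℝ) < 1 - Real.exp (-(φ * a * κ * t)) * (1 - Real.exp (a * C₀)) := by
    intro t
    nlinarith [Real.exp_pos (-(φ * a * κ * t))]
  constructor
  · simp only
    rw [show -(φ * a * κ * 0) = 0 by ring]
    rw [Real.exp_zero, one_mul, show (1:ℝ) - (1 - Real.exp (a * C₀)) = Real.exp (a * C₀) by ring,
      Real.log_exp]
    field_simp
  · intro t
    set u := φ * a * κ with hu
    have hg' : HasDerivAt (fun t => 1 - Real.exp (-(u * t)) * (1 - Real.exp (a * C₀)))
        (-(Real.exp (-(u * t)) * -u * (1 - Real.exp (a * C₀)))) t := by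
      have h1 : HasDerivAt (fun t : ℝ => -(u * t)) (-u) t := by
        exact ((hasDerivAt_id t).const_mul u).neg.congr_deriv (by ring)
      exact ((h1.exp).mul_const _).const_sub 1
    have hlog := ((hg'.log (ne_of_gt (hg t))).const_mul (1 / a))
    refine hlog.congr_deriv ?_
    have hgt := hg t
    have hexp : Real.exp (-(a * ((1 / a) * Real.log (1 - Real.exp (-(u * t)) * (1 - Real.exp (a * C₀))))))
        = (1 - Real.exp (-(u * t)) * (1 - Real.exp (a * C₀)))⁻¹ := by
      rw [show -(a * ((1 / a) * Real.log (1 - Real.exp (-(u * t)) * (1 - Real.exp (a * C₀)))))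
          = -(Real.log (1 - Real.exp (-(u * t)) * (1 - Real.exp (a * C₀)))) by
        field_simp]
      rw [Real.exp_neg, Real.exp_log hgt]
    simp only [hexp]
    simp only [hu]
    have hD : 1 - Real.exp (-(a * φ * κ * t)) + Real.exp (-(a * φ * κ * t)) * Real.exp (a * C₀) ≠ 0 := by
      rw [hu] at hgt
      ring_nf at hgt ⊢
      exact hgt.ne'
    field_simp
    ring_nf
    linear_combination (-1 : ℝ) * mul_inv_cancel₀ hD
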